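/- Let G be a full subgroup of Hom(ℤⁿ, ℤ) and let ξ : ℤⁿ → ℝ be a group homomorphism factored as ξ = ξ̃ ∘ p, where p : ℤⁿ → ℤᵐ is surjective and ξ̃ : ℤᵐ → ℝ is injective. Then p is subordinate to G if and only if ξ belongs to the ℝ-linear span of G inside the real vector space Hom(ℤⁿ, ℝ) (i.e. ξ ∈ G ⊗ ℝ). -/

import Mathlib

/-- `p : ℤⁿ → ℤᵐ` is subordinate to a subgroup `G ⊆ Hom(ℤⁿ, ℤ)` if all the coordinate
homomorphisms of `p` belong to `G`. -/
def Subordinate {n m : ℕ} (p : (Fin n → ℤ) →+ (Fin m → ℤ))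
    (G : AddSubgroup ((Fin n → ℤ) →+ ℤ)) : Prop :=
  ∀ j : Fin m, (Pi.evalAddMonoidHom (fun _ : Fin m => ℤ) j).comp p ∈ G

/-- The natural embedding of `Hom(ℤⁿ, ℤ)` into the real vector space `Hom(ℤⁿ, ℝ)`
(additive homomorphisms `ℤⁿ → ℝ`, viewed as `ℤ`-linear maps so as to carry an
`ℝ`-module structure). -/
def homToReal {n : ℕ} (h : (Fin n → ℤ) →+ ℤ) : (Fin n → ℤ) →ₗ[ℤ] ℝ :=
  ((Int.castAddHom ℝ).comp h).toIntLinearMap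

lemma hom_apply_sum {k : ℕ} {M : Type*} [AddCommGroup M] (φ : (Fin k → ℤ) →+ M) (a : Fin k → ℤ) :
    φ a = ∑ j, a j • φ (Pi.single j 1) := by
  conv_lhs => rw [← Finset.univ_sum_single a, map_sum]
  refine Finset.sum_congr rfl fun j _ => ?_
  rw [← map_zsmul]
  congr 1
  ext i
  by_cases h : i = j <;> simp [h, Pi.single_apply]

/-- evaluation at a point as an ℝ-linear map -/
def evalR {n : ℕ} (x : Fin n → ℤ) : ((Fin n → ℤ) →ₗ[ℤ] ℝ) →ₗ[ℝ] ℝ where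
  toFun f := f x
  map_add' _ _ := rfl
  map_smul' _ _ := rfl

lemma homToReal_apply {n : ℕ} (h : (Fin n → ℤ) →+ ℤ) (x : Fin n → ℤ) :
    homToReal h x = (h x : ℝ) := rfl

lemma homToReal_add {n : ℕ} (h g : (Fin n → ℤ) →+ ℤ) :
    homToReal (h + g) = homToReal h + homToReal g := by
  ext x; simp [homToReal]

lemma homToReal_zsmul {n : ℕ} (z : ℤ) (h : (Fin n → ℤ) →+ ℤ) :
    homToReal (z • h) = (z : ℝ) • homToReal h := by
  ext x; simp [homToReal]

/-- let `G` be a full subgroup of `Hom(ℤⁿ, ℤ)` and `ξ : ℤⁿ → ℝ` a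
homomorphism factored as `ξ = ξ̃ ∘ p` with `p : ℤⁿ → ℤᵐ` surjective and `ξ̃ : ℤᵐ → ℝ`
injective. Then `p` is subordinate to `G` iff `ξ` lies in the `ℝ`-linear span of `G`
inside `Hom(ℤⁿ, ℝ)`. -/
theorem subordinate_iff_mem_realSpan {n m : ℕ}
    (G : AddSubgroup ((Fin n → ℤ) →+ ℤ)) (hfull : ∃ K, IsCompl G K)
    (ξ : (Fin n → ℤ) →+ ℝ) (p : (Fin n → ℤ) →+ (Fin m → ℤ))
    (ξt : (Fin m → ℤ) →+ ℝ) (hp : Function.Surjective p) (hξt : Function.Injective ξt)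
    (hfact : ξ = ξt.comp p) :
    Subordinate p G ↔
      ξ.toIntLinearMap ∈ Submodule.span ℝ (homToReal '' (G : Set ((Fin n → ℤ) →+ ℤ))) := by
  -- notation
  set q : Fin m → ((Fin n → ℤ) →+ ℤ) :=
    fun j => (Pi.evalAddMonoidHom (fun _ : Fin m => ℤ) j).comp p with hq
  set c : Fin m → ℝ := fun j => ξt (Pi.single j 1) with hc
  -- the fundamental decomposition of ξ
  have key : ξ.toIntLinearMap = ∑ j, c j • homToReal (q j) := by
    refine LinearMap.ext fun x => ?_
    have h1 : ξ x = ∑ j, (p x j : ℝ) * c j := by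
      rw [hfact]
      simpa [zsmul_eq_mul] using hom_apply_sum ξt (p x)
    simp only [AddMonoidHom.coe_toIntLinearMap, h1, LinearMap.sum_apply, LinearMap.smul_apply,
      smul_eq_mul]
    exact Finset.sum_congr rfl fun j _ => mul_comm _ _
  constructor
  · intro hsub
    rw [key]
    exact Submodule.sum_mem _ fun j _ => Submodule.smul_mem _ _
      (Submodule.subset_span ⟨q j, hsub j, rfl⟩)
  · intro hmem
    obtain ⟨K, hK⟩ := hfull
    have hK' : IsCompl (AddSubgroup.toIntSubmodule G) (AddSubgroup.toIntSubmodule K) :=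
      (AddSubgroup.toIntSubmodule : AddSubgroup _ ≃o Submodule ℤ _).isCompl hK
    -- projection onto G
    set π : ((Fin n → ℤ) →+ ℤ) →ₗ[ℤ] ((Fin n → ℤ) →+ ℤ) :=
      (AddSubgroup.toIntSubmodule G).subtype.comp
        (Submodule.projectionOnto _ _ hK') with hπ
    have hπmem : ∀ h, π h ∈ G := fun h =>
      ((Submodule.projectionOnto _ _ hK') h).2
    have hπfix : ∀ g ∈ G, π g = g := by
      intro g hg
      have := Submodule.linearProjOfIsCompl_apply_left hK' ⟨g, hg⟩
      simp [hπ, this]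
    -- real-linear extension of π
    set Pr : ((Fin n → ℤ) →ₗ[ℤ] ℝ) →ₗ[ℝ] ((Fin n → ℤ) →ₗ[ℤ] ℝ) :=
      ∑ i : Fin n, (evalR (Pi.single i 1)).smulRight
        (homToReal (π (Pi.evalAddMonoidHom (fun _ : Fin n => ℤ) i))) with hPr
    have hPrhom : ∀ h : (Fin n → ℤ) →+ ℤ, Pr (homToReal h) = homToReal (π h) := by
      intro h
      have hdec : h = ∑ i : Fin n, h (Pi.single i 1) • Pi.evalAddMonoidHom (fun _ : Fin n => ℤ) i := by
        refine AddMonoidHom.ext fun x => ?_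
        have := hom_apply_sum h x
        simp only [AddMonoidHom.finset_sum_apply]
        rw [this]
        refine Finset.sum_congr rfl fun i _ => ?_
        simp [mul_comm, zsmul_eq_mul]
      conv_rhs => rw [hdec]
      rw [map_sum]
      have : homToReal (∑ i : Fin n, π (h (Pi.single i 1) • Pi.evalAddMonoidHom (fun _ : Fin n => ℤ) i))
          = ∑ i : Fin n, (h (Pi.single i 1) : ℝ) • homToReal (π (Pi.evalAddMonoidHom (fun _ : Fin n => ℤ) i)) := by
        rw [show (∑ i : Fin n, π (h (Pi.single i 1) • Pi.evalAddMonoidHom (fun _ : Fin n => ℤ) i))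
            = ∑ i : Fin n, h (Pi.single i 1) • π (Pi.evalAddMonoidHom (fun _ : Fin n => ℤ) i) by
          exact Finset.sum_congr rfl fun i _ => map_zsmul π _ _]
        induction (Finset.univ : Finset (Fin n)) using Finset.induction with
        | empty => refine LinearMap.ext fun x => ?_; simp [homToReal]
        | insert _ _ hni ih =>
            rw [Finset.sum_insert hni, Finset.sum_insert hni, homToReal_add, homToReal_zsmul, ih]
      rw [this, hPr]
      simp only [LinearMap.sum_apply, LinearMap.smulRight_apply]
      rfl
    have hPrfix : ∀ f ∈ Submodule.span ℝ (homToReal '' (G : Set ((Fin n → ℤ) →+ ℤ))), Pr f = f := by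
      intro f hf
      induction hf using Submodule.span_induction with
      | mem f hf =>
          obtain ⟨g, hg, rfl⟩ := hf
          rw [hPrhom, hπfix g hg]
      | zero => simp
      | add f g _ _ hf hg => rw [map_add, hf, hg]
      | smul r f _ hf => rw [map_smul, hf]
    -- now conclude
    have heq : ∑ j, c j • homToReal (π (q j)) = ∑ j, c j • homToReal (q j) := by
      calc ∑ j, c j • homToReal (π (q j)) = Pr (ξ.toIntLinearMap) := by
            rw [key, map_sum]
            exact Finset.sum_congr rfl fun j _ => by rw [map_smul, hPrhom]
        _ = ξ.toIntLinearMap := hPrfix _ hmem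
        _ = ∑ j, c j • homToReal (q j) := key
    intro j
    show q j ∈ G
    have hqπ : q j = π (q j) := by
      refine AddMonoidHom.ext fun x => ?_
      have hx := congrFun (congrArg (fun (f : (Fin n → ℤ) →ₗ[ℤ] ℝ) => (f : (Fin n → ℤ) → ℝ)) heq) x
      simp only [LinearMap.coe_sum, Finset.sum_apply, LinearMap.smul_apply, smul_eq_mul,
        homToReal_apply] at hx
      have h0 : ξt (fun k => q k x - π (q k) x) = 0 := by
        rw [hom_apply_sum ξt]
        have hck : ∀ k : Fin m, ξt (Pi.single k 1) = c k := fun _ => rfl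
        simp only [zsmul_eq_mul, hck]
        push_cast
        simp only [sub_mul, Finset.sum_sub_distrib, sub_eq_zero]
        simpa [mul_comm] using hx.symm
      have := hξt (h0.trans (map_zero ξt).symm)
      have := congrFun this j
      simpa [sub_eq_zero] using this
    rw [hqπ]
    exact hπmem _
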